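/- Let Y be a nonempty finite type, u : Y → ℝ, τ > 0, π_ref : Y → ℝ strictly positive, and let p : Y × Y → ℝ be weights with p(y1, y2) > 0 for all pairs. Define L(π) = Σ_{(y1,y2) ∈ Y×Y} p(y1, y2)·(h_π(y1, y2) − (u(y1) − u(y2))/τ)² for strictly positive π : Y → ℝ, where h_π(y1, y2) = log(π(y1)/π_ref(y1)) − log(π(y2)/π_ref(y2)). Then the Bradley–Terry policy π*(y) = π_ref(y)·exp(u(y)/τ) / Σ_{y' ∈ Y} π_ref(y')·exp(u(y')/τ) satisfies L(π*) = 0, hence π* is a global minimizer of L. -/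
import Mathlib


theorem stmt_16 {Y : Type*} [Fintype Y] [Nonempty Y]
    (u : Y → ℝ) (τ : ℝ) (hτ : 0 < τ)
    (πref : Y → ℝ) (hπref : ∀ y, 0 < πref y)
    (p : Y × Y → ℝ) (hp : ∀ q, 0 < p q)
    (L : (Y → ℝ) → ℝ)
    (hL : ∀ π : Y → ℝ, L π = ∑ q : Y × Y,
      p q * ((Real.log (π q.1 / πref q.1) - Real.log (π q.2 / πref q.2)) -
        (u q.1 - u q.2) / τ) ^ 2)
    (πstar : Y → ℝ)
    (hπstar : ∀ y, πstar y =
      πref y * Real.exp (u y / τ) / ∑ y', πref y' * Real.exp (u y' / τ)) :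
    L πstar = 0 ∧ ∀ π : Y → ℝ, (∀ y, 0 < π y) → L πstar ≤ L π := by
  have hZ : 0 < ∑ y', πref y' * Real.exp (u y' / τ) :=
    Finset.sum_pos (fun y _ => mul_pos (hπref y) (Real.exp_pos _)) Finset.univ_nonempty
  have hlog : ∀ y, Real.log (πstar y / πref y) =
      u y / τ - Real.log (∑ y', πref y' * Real.exp (u y' / τ)) := by
    intro y
    rw [hπstar y, div_div, mul_comm _ (πref y), mul_div_mul_left _ _ (hπref y).ne',
      Real.log_div (Real.exp_ne_zero _) hZ.ne', Real.log_exp]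
  have hzero : L πstar = 0 := by
    rw [hL]
    apply Finset.sum_eq_zero
    intro q _
    rw [hlog q.1, hlog q.2, sub_div]
    ring
  refine ⟨hzero, fun π hπ => ?_⟩
  rw [hzero, hL]
  exact Finset.sum_nonneg fun q _ => mul_nonneg (hp q).le (sq_nonneg _)
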